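/- There exists a group-e-homogroup that is not a group-e-grouplike: fix an integer n ≥ 2 and consider Fin n with addition modulo n (a group with identity 0) and the operation min (with respect to the natural linear order on Fin n). Then min is associative; the 0-join laws min(0, x+y) = min(0, min(x,y)) and min(x+y, 0) = min(min(x,y), 0) hold for all x,y, so (Fin n, +, 0, min) is a group-0-semigroup; the singleton {0} is an ideal of (Fin n, min) that is a group under min, so (Fin n, min) is a homogroup; but every element of Fin n is a central idempotent of min, so (Fin n, min) has more than one central idempotent and hence is not a grouplike. -/
import Mathlib


/-- A subset `I` is an ideal of the semigroup `(G, op)`. -/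
def IsMagmaIdeal {G : Type*} (op : G → G → G) (I : Set G) : Prop :=
  ∀ x : G, ∀ i ∈ I, op x i ∈ I ∧ op i x ∈ I

/-- A subset `H` is a subgroup of the semigroup `(G, op)`: it is closed under `op`
and forms a group under `op`. -/
def IsSubgroupUnder {G : Type*} (op : G → G → G) (H : Set G) : Prop :=
  (∀ a ∈ H, ∀ b ∈ H, op a b ∈ H) ∧
  ∃ ι ∈ H, (∀ a ∈ H, op ι a = a ∧ op a ι = a) ∧
    ∀ a ∈ H, ∃ b ∈ H, op a b = ι ∧ op b a = ι

/-- For every integer `n ≥ 2` (here `n + 2` with `n : ℕ`), on `Fin (n+2)`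
with addition modulo `n+2` (a group with identity `0`) and the operation `min`:
`min` is associative; the `0`-join laws hold (so we get a group-`0`-semigroup);
`{0}` is an ideal of `(Fin (n+2), min)` that is a group under `min` (so it is a
homogroup); but every element is a central idempotent of `min`, and there are at least
two distinct central idempotents, so `(Fin (n+2), min)` is not a grouplike. -/
theorem stmt_8 (n : ℕ) :
    (∀ x y z : Fin (n + 2), min (min x y) z = min x (min y z)) ∧
    (∀ x y : Fin (n + 2),
      min 0 (x + y) = min 0 (min x y) ∧ min (x + y) 0 = min (min x y) 0) ∧
    (IsMagmaIdeal (fun a b : Fin (n + 2) => min a b) {0} ∧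
      IsSubgroupUnder (fun a b : Fin (n + 2) => min a b) {0}) ∧
    (∀ δ : Fin (n + 2), min δ δ = δ ∧ ∀ x : Fin (n + 2), min δ x = min x δ) ∧
    (∃ δ₁ δ₂ : Fin (n + 2), δ₁ ≠ δ₂ ∧
      (min δ₁ δ₁ = δ₁ ∧ ∀ x : Fin (n + 2), min δ₁ x = min x δ₁) ∧
      (min δ₂ δ₂ = δ₂ ∧ ∀ x : Fin (n + 2), min δ₂ x = min x δ₂)) := by
  have h0 : ∀ a : Fin (n + 2), min 0 a = 0 := fun a => min_eq_left (Fin.zero_le a)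
  have h0' : ∀ a : Fin (n + 2), min a 0 = 0 := fun a => min_eq_right (Fin.zero_le a)
  refine ⟨fun x y z => min_assoc x y z, fun x y => ⟨by rw [h0, h0], by rw [h0', h0']⟩,
    ⟨?_, ?_⟩, fun δ => ⟨min_self δ, fun x => min_comm δ x⟩,
    0, 1, ?_, ⟨min_self 0, fun x => min_comm 0 x⟩, ⟨min_self 1, fun x => min_comm 1 x⟩⟩
  · rintro x i rfl
    exact ⟨h0' x, h0 x⟩
  · exact ⟨fun a ha b hb => by simp_all, 0, rfl,
      fun a ha => by simp_all, fun a ha => ⟨0, rfl, by simp_all⟩⟩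
  · exact (Fin.zero_ne_one).elim
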